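/- Fix α, β, γ, δ ∈ ℂ and set L(x,y,z,t) = αx + βy + γz + δt. For (x, y, z, t) ∈ ℂ⁴ let N(x,y,z,t) be the 3×3 matrix with rows (x, y, 0), (t, z, 0), (0, 0, L(x,y,z,t)), and let M(x,y,z,t) = [[0, N], [−Nᵀ, 0]] be the associated 6×6 block matrix. Then for every nonzero (x, y, z, t) ∈ ℂ⁴, the rank of M(x,y,z,t) is at most 2 if and only if xz − yt = 0 and L(x,y,z,t) = 0. -/

import Mathlib

open Matrix

/-- The `3 × 3` matrix of linear forms giving a determinantal representation of the
union of the quadric `xz − yt = 0` with the plane `L = αx + βy + γz + δt = 0`. -/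
def qpN (α β γ δ : ℂ) (x y z t : ℂ) : Matrix (Fin 3) (Fin 3) ℂ :=
  !![x, y, 0;
     t, z, 0;
     0, 0, α * x + β * y + γ * z + δ * t]

/-- The associated `6 × 6` skew-symmetric block matrix `M = [[0, N], [−Nᵀ, 0]]`. -/
def qpM (α β γ δ : ℂ) (x y z t : ℂ) : Matrix (Fin 3 ⊕ Fin 3) (Fin 3 ⊕ Fin 3) ℂ :=
  Matrix.fromBlocks 0 (qpN α β γ δ x y z t) (-(qpN α β γ δ x y z t)ᵀ) 0

/-- If `N = u vᵀ` is an outer product, then `[[0,N],[-Nᵀ,0]]` has rank at most `2`. -/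
lemma qp_aux_factor (N : Matrix (Fin 3) (Fin 3) ℂ) (u v : Fin 3 → ℂ)
    (hN : N = vecMulVec u v) :
    (Matrix.fromBlocks 0 N (-Nᵀ) 0).rank ≤ 2 := by
  set A : Matrix (Fin 3 ⊕ Fin 3) (Fin 2) ℂ :=
    Matrix.of (Sum.elim (fun i => ![u i, 0]) (fun i => ![0, v i])) with hA
  set B : Matrix (Fin 2) (Fin 3 ⊕ Fin 3) ℂ :=
    Matrix.of ![Sum.elim (fun _ => 0) v, Sum.elim (fun j => -u j) (fun _ => 0)] with hB
  have hM : Matrix.fromBlocks 0 N (-Nᵀ) 0 = A * B := by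
    ext (i | i) (j | j) <;>
      simp [hA, hB, Matrix.mul_apply, Fin.sum_univ_two, hN, vecMulVec_apply, mul_comm]
  calc (Matrix.fromBlocks 0 N (-Nᵀ) 0).rank = (A * B).rank := by rw [hM]
    _ ≤ A.rank := Matrix.rank_mul_le_left A B
    _ ≤ Fintype.card (Fin 2) := Matrix.rank_le_card_width A
    _ = 2 := by simp

/-- A `6 × 6` matrix possessing a nonsingular `3 × 3` submatrix has rank at least `3`. -/
lemma qp_aux_rank_ge (A : Matrix (Fin 3 ⊕ Fin 3) (Fin 3 ⊕ Fin 3) ℂ)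
    (f g : Fin 3 → Fin 3 ⊕ Fin 3) (hd : (A.submatrix f g).det ≠ 0) :
    3 ≤ A.rank := by
  set P := (1 : Matrix (Fin 3 ⊕ Fin 3) (Fin 3 ⊕ Fin 3) ℂ).submatrix f ⇑(Equiv.refl (Fin 3 ⊕ Fin 3))
  set Q := (1 : Matrix (Fin 3 ⊕ Fin 3) (Fin 3 ⊕ Fin 3) ℂ).submatrix ⇑(Equiv.refl (Fin 3 ⊕ Fin 3)) g
  have hPQ : A.submatrix f g = P * A * Q := by
    rw [Matrix.one_submatrix_mul f (Equiv.refl _) A]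
    rw [Matrix.mul_submatrix_one (Equiv.refl _) g]
    simp
  have h1 : (A.submatrix f g).rank = 3 := by
    rw [Matrix.rank_of_isUnit _ ((Matrix.isUnit_iff_isUnit_det _).2 (isUnit_iff_ne_zero.2 hd))]
    simp
  calc 3 = (A.submatrix f g).rank := h1.symm
    _ = (P * (A * Q)).rank := by rw [hPQ, Matrix.mul_assoc]
    _ ≤ (A * Q).rank := Matrix.rank_mul_le_right P (A * Q)
    _ ≤ A.rank := Matrix.rank_mul_le_left A Q

/-- For a nonzero `(x, y, z, t) ∈ ℂ⁴`, the rank of `M(x,y,z,t)` is at most `2` if and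
only if `xz − yt = 0` and `L(x,y,z,t) = 0`: the rank drops to `2` exactly along the
conic `Q ∩ π`. -/
theorem qpM_rank_le_two_iff (α β γ δ : ℂ) (x y z t : ℂ)
    (h : ¬(x = 0 ∧ y = 0 ∧ z = 0 ∧ t = 0)) :
    (qpM α β γ δ x y z t).rank ≤ 2 ↔
      x * z - y * t = 0 ∧ α * x + β * y + γ * z + δ * t = 0 := by
  constructor
  · intro hr
    by_contra hc
    rw [not_and_or] at hc
    have h3 : 3 ≤ (qpM α β γ δ x y z t).rank := by
      rcases hc with hq | hl
      · -- quadric fails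
        by_cases hx : x = 0
        · have hy : y ≠ 0 := by
            intro hy; exact hq (by rw [hx, hy]; ring)
          refine qp_aux_rank_ge _ ![Sum.inl 0, Sum.inl 1, Sum.inr 1]
            ![Sum.inr 0, Sum.inr 1, Sum.inl 0] ?_
          have : ((qpM α β γ δ x y z t).submatrix ![Sum.inl 0, Sum.inl 1, Sum.inr 1]
              ![Sum.inr 0, Sum.inr 1, Sum.inl 0]).det = -y * (x * z - y * t) := by
            rw [Matrix.det_fin_three]
            simp [qpM, qpN, Matrix.det_fin_three, Matrix.vecHead, Matrix.vecTail]; ring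
          rw [this]
          exact mul_ne_zero (neg_ne_zero.2 hy) hq
        · refine qp_aux_rank_ge _ ![Sum.inl 0, Sum.inl 1, Sum.inr 0]
            ![Sum.inr 0, Sum.inr 1, Sum.inl 0] ?_
          have : ((qpM α β γ δ x y z t).submatrix ![Sum.inl 0, Sum.inl 1, Sum.inr 0]
              ![Sum.inr 0, Sum.inr 1, Sum.inl 0]).det = -x * (x * z - y * t) := by
            rw [Matrix.det_fin_three]
            simp [qpM, qpN, Matrix.det_fin_three, Matrix.vecHead, Matrix.vecTail]; ring
          rw [this]
          exact mul_ne_zero (neg_ne_zero.2 hx) hq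
      · -- plane fails
        have hw : x ≠ 0 ∨ y ≠ 0 ∨ z ≠ 0 ∨ t ≠ 0 := by
          by_contra hw; push_neg at hw; exact h ⟨hw.1, hw.2.1, hw.2.2.1, hw.2.2.2⟩
        rcases hw with hx | hy | hz | ht
        · refine qp_aux_rank_ge _ ![Sum.inl 0, Sum.inl 2, Sum.inr 0]
            ![Sum.inr 0, Sum.inr 2, Sum.inl 0] ?_
          have : ((qpM α β γ δ x y z t).submatrix ![Sum.inl 0, Sum.inl 2, Sum.inr 0]
              ![Sum.inr 0, Sum.inr 2, Sum.inl 0]).det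
              = -(x * x) * (α * x + β * y + γ * z + δ * t) := by
            rw [Matrix.det_fin_three]
            simp [qpM, qpN, Matrix.det_fin_three, Matrix.vecHead, Matrix.vecTail]; ring
          rw [this]
          exact mul_ne_zero (neg_ne_zero.2 (mul_ne_zero hx hx)) hl
        · refine qp_aux_rank_ge _ ![Sum.inl 0, Sum.inl 2, Sum.inr 1]
            ![Sum.inr 1, Sum.inr 2, Sum.inl 0] ?_
          have : ((qpM α β γ δ x y z t).submatrix ![Sum.inl 0, Sum.inl 2, Sum.inr 1]
              ![Sum.inr 1, Sum.inr 2, Sum.inl 0]).det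
              = -(y * y) * (α * x + β * y + γ * z + δ * t) := by
            rw [Matrix.det_fin_three]
            simp [qpM, qpN, Matrix.det_fin_three, Matrix.vecHead, Matrix.vecTail]; ring
          rw [this]
          exact mul_ne_zero (neg_ne_zero.2 (mul_ne_zero hy hy)) hl
        · refine qp_aux_rank_ge _ ![Sum.inl 1, Sum.inl 2, Sum.inr 1]
            ![Sum.inr 1, Sum.inr 2, Sum.inl 1] ?_
          have : ((qpM α β γ δ x y z t).submatrix ![Sum.inl 1, Sum.inl 2, Sum.inr 1]
              ![Sum.inr 1, Sum.inr 2, Sum.inl 1]).det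
              = -(z * z) * (α * x + β * y + γ * z + δ * t) := by
            rw [Matrix.det_fin_three]
            simp [qpM, qpN, Matrix.det_fin_three, Matrix.vecHead, Matrix.vecTail]; ring
          rw [this]
          exact mul_ne_zero (neg_ne_zero.2 (mul_ne_zero hz hz)) hl
        · refine qp_aux_rank_ge _ ![Sum.inl 1, Sum.inl 2, Sum.inr 0]
            ![Sum.inr 0, Sum.inr 2, Sum.inl 1] ?_
          have : ((qpM α β γ δ x y z t).submatrix ![Sum.inl 1, Sum.inl 2, Sum.inr 0]
              ![Sum.inr 0, Sum.inr 2, Sum.inl 1]).det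
              = -(t * t) * (α * x + β * y + γ * z + δ * t) := by
            rw [Matrix.det_fin_three]
            simp [qpM, qpN, Matrix.det_fin_three, Matrix.vecHead, Matrix.vecTail]; ring
          rw [this]
          exact mul_ne_zero (neg_ne_zero.2 (mul_ne_zero ht ht)) hl
    omega
  · rintro ⟨hq, hl⟩
    by_cases hx : x = 0
    · have hyt : y * t = 0 := by
        have := hq; rw [hx] at this; linear_combination -this
      rcases mul_eq_zero.1 hyt with hy | ht
      · -- x = 0, y = 0 : N = ![0,1,0] ⬝ ![t,z,0]ᵀ
        refine qp_aux_factor _ ![0, 1, 0] ![t, z, 0] ?_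
        ext i j
        fin_cases i <;> fin_cases j <;>
            simp [qpN, vecMulVec_apply, hx, hy, Matrix.vecHead, Matrix.vecTail] <;>
          linear_combination hl - α * hx - β * hy
      · -- x = 0, t = 0 : N = ![y,z,0] ⬝ ![0,1,0]ᵀ
        refine qp_aux_factor _ ![y, z, 0] ![0, 1, 0] ?_
        ext i j
        fin_cases i <;> fin_cases j <;>
            simp [qpN, vecMulVec_apply, hx, ht, Matrix.vecHead, Matrix.vecTail] <;>
          linear_combination hl - α * hx - δ * ht
    · -- x ≠ 0 : N = ![x,t,0] ⬝ ![1, y/x, 0]ᵀ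
      refine qp_aux_factor _ ![x, t, 0] ![1, y / x, 0] ?_
      ext i j
      fin_cases i <;> fin_cases j <;>
        simp [qpN, vecMulVec_apply, Matrix.vecHead, Matrix.vecTail]
      · field_simp
      · field_simp
        linear_combination hq
      · linear_combination hl
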